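/- Let J ⊂ I ⊂ S_f be monomial ideals and t a new variable. Then sdepth((I/J)[t]) = sdepth((I/J)[t, t^{-1}]) = sdepth(I/J) + 1, where (I/J)[t] and (I/J)[t,t^{-1}] are the extensions of I/J to the polynomial ring S_f[t] and the Laurent polynomial extension S_f[t,t^{-1}], respectively. -/

import Mathlib

/-!
Combinatorial model of the localized polynomial ring `S_f`, where
`S = K[x_1, …, x_n]`, `A ⊆ {1, …, n}` and `f = ∏_{j ∈ A} x_j`.

Since all the `ℤⁿ`-graded components of `S_f` are at most one-dimensional over `K`,
monomial `K`-subspaces of `S_f` (in particular monomial ideals, Stanley spaces and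
modules `I/J`) are faithfully encoded by their sets of exponent vectors `a : Fin n → ℤ`,
direct sum decompositions into monomial subspaces correspond exactly to partitions of
the exponent sets, and (for those sets `Z` considered here) `u·K[Z]` is automatically a
free `K[Z]`-module.
-/

/-- Exponent vectors of the monomials of `S_f`: all `a : ℤⁿ` with `a j ≥ 0` for `j ∉ A`. -/
def SfMon {n : ℕ} (A : Finset (Fin n)) : Set (Fin n → ℤ) :=
  {a | ∀ j, j ∉ A → 0 ≤ a j}

/-- `M` is the set of exponent vectors of the monomials of a monomial ideal of `S_f`
(for `A = ∅` this is a monomial ideal of the polynomial ring `S` itself). -/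
def IsMonomialIdeal {n : ℕ} (A : Finset (Fin n)) (M : Set (Fin n → ℤ)) : Prop :=
  M ⊆ SfMon A ∧ ∀ a ∈ M, ∀ c ∈ SfMon A, a + c ∈ M

/-- Admissible sets of "variables" for Stanley spaces in `S_f`: `(i, true)` stands for
`x i` and `(i, false)` for `x i⁻¹`; inverse variables exist only for `i ∈ A`, and
`{x i, x i⁻¹} ⊄ Z`. -/
def ZOk {n : ℕ} (A : Finset (Fin n)) (Z : Finset (Fin n × Bool)) : Prop :=
  (∀ i : Fin n, (i, false) ∈ Z → i ∈ A) ∧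
  ∀ i : Fin n, ¬((i, true) ∈ Z ∧ (i, false) ∈ Z)

/-- Exponent vectors of the monomials of the Stanley space `u·K[Z]`. -/
def stanleySet {n : ℕ} (u : Fin n → ℤ) (Z : Finset (Fin n × Bool)) : Set (Fin n → ℤ) :=
  {a | ∀ i : Fin n, ((i, true) ∈ Z → u i ≤ a i) ∧ ((i, false) ∈ Z → a i ≤ u i) ∧
      ((i, true) ∉ Z → (i, false) ∉ Z → a i = u i)}

/-- The family of Stanley spaces `u i · K[Z i]` is a Stanley decomposition of the
monomial `K`-vector space whose monomials have exponent vectors in `M`. -/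
def IsStanleyDecompOn {n : ℕ} (A : Finset (Fin n)) (M : Set (Fin n → ℤ)) {ι : Type}
    (u : ι → Fin n → ℤ) (Z : ι → Finset (Fin n × Bool)) : Prop :=
  Finite ι ∧ (∀ i, ZOk A (Z i)) ∧
  Pairwise (fun i j : ι => Disjoint (stanleySet (u i) (Z i)) (stanleySet (u j) (Z j))) ∧
  (⋃ i, stanleySet (u i) (Z i)) = M

/-- Stanley depth of the monomial `K`-space with exponent set `M` (value `⊤` for `M = ∅`). -/
noncomputable def sdepth {n : ℕ} (A : Finset (Fin n)) (M : Set (Fin n → ℤ)) : ℕ∞ :=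
  sSup {k : ℕ∞ | ∃ (r : ℕ) (u : Fin r → Fin n → ℤ) (Z : Fin r → Finset (Fin n × Bool)),
    IsStanleyDecompOn A M u Z ∧ ∀ i, k ≤ ((Z i).card : ℕ∞)}

/-- The exponent vector of `f = ∏_{j ∈ A} x_j`. -/
def fVec {n : ℕ} (A : Finset (Fin n)) : Fin n → ℤ := fun i => if i ∈ A then 1 else 0

/-- Localization at `f` of a monomial ideal (given by its set of exponent vectors). -/
def locSet {n : ℕ} (A : Finset (Fin n)) (M : Set (Fin n → ℤ)) : Set (Fin n → ℤ) :=
  {b ∈ SfMon A | ∃ k : ℕ, b + (k : ℤ) • fVec A ∈ M}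

/-- `|a| = Σ_i |a_i|`, the degree used for the Hilbert series. -/
def degAbs {n : ℕ} (a : Fin n → ℤ) : ℕ := ∑ i, (a i).natAbs

/-- The Hilbert series `H_M(t) = Σ_d H(M,d) t^d`, `H(M,d) = #{a ∈ M : |a| = d}`, of the
`ℤⁿ`-graded `K`-vector space with monomial exponent set `M`. -/
noncomputable def hilbSeries {n : ℕ} (M : Set (Fin n → ℤ)) : PowerSeries ℚ :=
  PowerSeries.mk fun d => (({a ∈ M | degAbs a = d}).ncard : ℚ)

/-- A prime filtration `J = N 0 ⊂ N 1 ⊂ … ⊂ N r = I` of `I/J` by monomial ideals of `S_f`,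
with `i`-th factor isomorphic, as a `ℤⁿ`-graded module, to `(S_f/P_{B i})(-a i)`, where
`P_B` is the monomial prime ideal generated by the variables `x j`, `j ∈ B`. -/
def IsPrimeFiltration {n : ℕ} (A : Finset (Fin n)) (J I : Set (Fin n → ℤ)) (r : ℕ)
    (N : Fin (r + 1) → Set (Fin n → ℤ)) (B : Fin r → Finset (Fin n))
    (a : Fin r → Fin n → ℤ) : Prop :=
  N 0 = J ∧ N (Fin.last r) = I ∧
  (∀ i : Fin (r + 1), IsMonomialIdeal A (N i)) ∧
  (∀ i : Fin r, N i.castSucc ⊂ N i.succ) ∧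
  (∀ i : Fin r, ∀ j ∈ A, j ∉ B i) ∧
  (∀ i : Fin r, ∀ j, 0 ≤ a i j) ∧
  (∀ i : Fin r, ∀ j ∈ A, a i j = 0) ∧
  (∀ i : Fin r, N i.succ \ N i.castSucc =
    {b | ∃ c ∈ SfMon A, (∀ j ∈ B i, c j = 0) ∧ b = a i + c})

/-- `fdepth` of `I/J` (value `⊤` for `I = J`); `dim S_f/P_B = n - |B|`. -/
noncomputable def fdepth {n : ℕ} (A : Finset (Fin n)) (J I : Set (Fin n → ℤ)) : ℕ∞ :=
  sSup {k : ℕ∞ | ∃ (r : ℕ) (N : Fin (r + 1) → Set (Fin n → ℤ)) (B : Fin r → Finset (Fin n))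
      (a : Fin r → Fin n → ℤ), IsPrimeFiltration A J I r N B a ∧
      ∀ i, k ≤ ((n - (B i).card : ℕ) : ℕ∞)}

/-- The set of exponent vectors of the monomials of the colon ideal `(J :_{S_f} I)`,
which is the annihilator of `I/J`. -/
def colonSet {n : ℕ} (A : Finset (Fin n)) (I J : Set (Fin n → ℤ)) : Set (Fin n → ℤ) :=
  {c ∈ SfMon A | ∀ a ∈ I, a + c ∈ J}

/-- The monomial prime `P_B·S_f` contains the monomial ideal with exponent set `Q`. -/
def primeContainsIdeal {n : ℕ} (B : Finset (Fin n)) (Q : Set (Fin n → ℤ)) : Prop :=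
  ∀ c ∈ Q, ∃ j ∈ B, 1 ≤ c j

/-- `P_B·S_f` is a minimal prime ideal of the module `I/J`, i.e. a prime of `S_f`
(so `B ∩ A = ∅`) minimal among those containing `ann(I/J) = (J : I)`. -/
def IsMinimalPrimeOf {n : ℕ} (A B : Finset (Fin n)) (I J : Set (Fin n → ℤ)) : Prop :=
  (∀ j ∈ A, j ∉ B) ∧ primeContainsIdeal B (colonSet A I J) ∧
  ∀ B' ⊆ B, primeContainsIdeal B' (colonSet A I J) → B' = B
namespace SdepthAux

open Finset

variable {n : ℕ}

/-! ### `Z`-set constructions between `Fin n` and `Fin (n+1)` -/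

def upZ (Z : Finset (Fin n × Bool)) : Finset (Fin (n + 1) × Bool) :=
  Z.image fun q => (q.1.castSucc, q.2)

lemma castSucc_mem_upZ {Z : Finset (Fin n × Bool)} {j : Fin n} {b : Bool} :
    (j.castSucc, b) ∈ upZ Z ↔ (j, b) ∈ Z := by
  simp only [upZ, Finset.mem_image, Prod.mk.injEq]
  constructor
  · rintro ⟨⟨i, c⟩, h, h1, h2⟩
    obtain rfl : i = j := Fin.castSucc_injective n h1
    subst h2; exact h
  · exact fun h => ⟨(j, b), h, rfl, rfl⟩

lemma last_not_mem_upZ {Z : Finset (Fin n × Bool)} {b : Bool} :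
    (Fin.last n, b) ∉ upZ Z := by
  simp only [upZ, Finset.mem_image, Prod.mk.injEq]
  rintro ⟨⟨i, c⟩, h, h1, h2⟩
  exact (Fin.castSucc_lt_last i).ne h1

lemma card_upZ (Z : Finset (Fin n × Bool)) : (upZ Z).card = Z.card :=
  Finset.card_image_of_injective _ (fun a b h => by
    obtain ⟨h1, h2⟩ := Prod.mk.injEq .. ▸ h
    exact Prod.ext (Fin.castSucc_injective n h1) h2)

def downZ (Z : Finset (Fin (n + 1) × Bool)) : Finset (Fin n × Bool) :=
  Finset.univ.filter fun q => (q.1.castSucc, q.2) ∈ Z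

lemma mem_downZ {Z : Finset (Fin (n + 1) × Bool)} {q : Fin n × Bool} :
    q ∈ downZ Z ↔ (q.1.castSucc, q.2) ∈ Z := by simp [downZ]

lemma upZ_downZ (Z : Finset (Fin (n + 1) × Bool)) :
    upZ (downZ Z) = Z.filter fun p => p.1 ≠ Fin.last n := by
  ext ⟨i, b⟩
  rcases Fin.eq_castSucc_or_eq_last i with ⟨j, rfl⟩ | rfl
  · simp [castSucc_mem_upZ, mem_downZ, (Fin.castSucc_lt_last j).ne]
  · simp [last_not_mem_upZ]

lemma card_le_card_downZ_add_one {A : Finset (Fin (n + 1))} {Z : Finset (Fin (n + 1) × Bool)}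
    (hZ : ZOk A Z) : Z.card ≤ (downZ Z).card + 1 := by
  classical
  have hsub : ∀ c : Bool, (Fin.last n, !c) ∉ Z →
      Z ⊆ insert (Fin.last n, c) (upZ (downZ Z)) := by
    intro c hc ⟨i, b⟩ hib
    rcases Fin.eq_castSucc_or_eq_last i with ⟨j, rfl⟩ | rfl
    · exact Finset.mem_insert_of_mem (by rw [castSucc_mem_upZ, mem_downZ]; exact hib)
    · have : b = c := by
        by_contra hbc
        have : b = !c := by cases b <;> cases c <;> simp_all
        exact hc (this ▸ hib)
      subst this; exact Finset.mem_insert_self _ _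
  have key : ∃ c : Bool, (Fin.last n, !c) ∉ Z := by
    by_cases h : (Fin.last n, false) ∈ Z
    · refine ⟨false, fun h' => hZ.2 (Fin.last n) ⟨by simpa using h', h⟩⟩
    · exact ⟨true, by simpa using h⟩
  obtain ⟨c, hc⟩ := key
  calc Z.card ≤ (insert (Fin.last n, c) (upZ (downZ Z))).card :=
        Finset.card_le_card (hsub c hc)
    _ ≤ (upZ (downZ Z)).card + 1 := Finset.card_insert_le _ _
    _ = (downZ Z).card + 1 := by rw [card_upZ]

end SdepthAux
namespace SdepthAux

variable {n : ℕ}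

/-! ### Slicing and lifting Stanley sets -/

def lastOk (m : ℤ) (u : Fin (n + 1) → ℤ) (Z : Finset (Fin (n + 1) × Bool)) : Prop :=
  ((Fin.last n, true) ∈ Z → u (Fin.last n) ≤ m) ∧
  ((Fin.last n, false) ∈ Z → m ≤ u (Fin.last n)) ∧
  ((Fin.last n, true) ∉ Z → (Fin.last n, false) ∉ Z → m = u (Fin.last n))

lemma snoc_mem_stanleySet_iff {m : ℤ} {u : Fin (n + 1) → ℤ} {Z : Finset (Fin (n + 1) × Bool)}
    {b : Fin n → ℤ} :
    Fin.snoc b m ∈ stanleySet u Z ↔ lastOk m u Z ∧ b ∈ stanleySet (Fin.init u) (downZ Z) := by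
  constructor
  · intro h
    refine ⟨⟨fun h1 => ?_, fun h1 => ?_, fun h1 h2 => ?_⟩,
      fun j => ⟨fun h1 => ?_, fun h1 => ?_, fun h1 h2 => ?_⟩⟩
    · simpa using (h (Fin.last n)).1 h1
    · simpa using (h (Fin.last n)).2.1 h1
    · simpa using (h (Fin.last n)).2.2 h1 h2
    · simpa [Fin.init] using (h j.castSucc).1 (mem_downZ.mp h1)
    · simpa [Fin.init] using (h j.castSucc).2.1 (mem_downZ.mp h1)
    · simpa [Fin.init] using (h j.castSucc).2.2 (fun hh => h1 (mem_downZ.mpr hh))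
        (fun hh => h2 (mem_downZ.mpr hh))
  · rintro ⟨hl, hb⟩ i
    rcases Fin.eq_castSucc_or_eq_last i with ⟨j, rfl⟩ | rfl
    · refine ⟨fun h1 => ?_, fun h1 => ?_, fun h1 h2 => ?_⟩
      · simpa [Fin.init] using (hb j).1 (mem_downZ.mpr h1)
      · simpa [Fin.init] using (hb j).2.1 (mem_downZ.mpr h1)
      · simpa [Fin.init] using (hb j).2.2 (fun hh => h1 (mem_downZ.mp hh))
          (fun hh => h2 (mem_downZ.mp hh))
    · refine ⟨fun h1 => by simpa using hl.1 h1, fun h1 => by simpa using hl.2.1 h1,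
        fun h1 h2 => by simpa using hl.2.2 h1 h2⟩

def liftZ (o : Option Bool) (Z : Finset (Fin n × Bool)) : Finset (Fin (n + 1) × Bool) :=
  match o with
  | none => upZ Z
  | some c => insert (Fin.last n, c) (upZ Z)

def lastP (o : Option Bool) (m t : ℤ) : Prop :=
  match o with
  | none => t = m
  | some true => m ≤ t
  | some false => t ≤ m

lemma mem_liftZ_castSucc {o : Option Bool} {Z : Finset (Fin n × Bool)} {j : Fin n} {b : Bool} :
    (j.castSucc, b) ∈ liftZ o Z ↔ (j, b) ∈ Z := by
  cases o with
  | none => exact castSucc_mem_upZ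
  | some c =>
    simp only [liftZ, Finset.mem_insert, castSucc_mem_upZ, Prod.mk.injEq]
    constructor
    · rintro (⟨h1, h2⟩ | h)
      · exact absurd h1 (Fin.castSucc_lt_last j).ne
      · exact h
    · exact Or.inr

lemma mem_liftZ_last {o : Option Bool} {Z : Finset (Fin n × Bool)} {b : Bool} :
    (Fin.last n, b) ∈ liftZ o Z ↔ o = some b := by
  cases o with
  | none => simp [liftZ, last_not_mem_upZ]
  | some c =>
    constructor
    · intro h
      rcases Finset.mem_insert.mp h with h | h
      · have : b = c := congrArg Prod.snd h
        subst this; rfl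
      · exact absurd h last_not_mem_upZ
    · intro h
      have : c = b := by injection h
      subst this
      exact Finset.mem_insert_self _ _

lemma mem_stanleySet_lift {o : Option Bool} {m : ℤ} {u : Fin n → ℤ} {Z : Finset (Fin n × Bool)}
    {a : Fin (n + 1) → ℤ} :
    a ∈ stanleySet (Fin.snoc u m) (liftZ o Z) ↔
      Fin.init a ∈ stanleySet u Z ∧ lastP o m (a (Fin.last n)) := by
  constructor
  · intro h
    refine ⟨fun j => ⟨fun h1 => ?_, fun h1 => ?_, fun h1 h2 => ?_⟩, ?_⟩
    · simpa [Fin.init] using (h j.castSucc).1 (mem_liftZ_castSucc.mpr h1)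
    · simpa [Fin.init] using (h j.castSucc).2.1 (mem_liftZ_castSucc.mpr h1)
    · simpa [Fin.init] using (h j.castSucc).2.2 (fun hh => h1 (mem_liftZ_castSucc.mp hh))
        (fun hh => h2 (mem_liftZ_castSucc.mp hh))
    · have hl := h (Fin.last n)
      cases o with
      | none =>
        have := hl.2.2 (by simp [mem_liftZ_last]) (by simp [mem_liftZ_last])
        simpa [lastP] using this
      | some c =>
        cases c with
        | true => simpa [lastP] using hl.1 (mem_liftZ_last.mpr rfl)
        | false => simpa [lastP] using hl.2.1 (mem_liftZ_last.mpr rfl)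
  · rintro ⟨hb, hl⟩ i
    rcases Fin.eq_castSucc_or_eq_last i with ⟨j, rfl⟩ | rfl
    · refine ⟨fun h1 => ?_, fun h1 => ?_, fun h1 h2 => ?_⟩
      · simpa [Fin.init] using (hb j).1 (mem_liftZ_castSucc.mp h1)
      · simpa [Fin.init] using (hb j).2.1 (mem_liftZ_castSucc.mp h1)
      · simpa [Fin.init] using (hb j).2.2 (fun hh => h1 (mem_liftZ_castSucc.mpr hh))
          (fun hh => h2 (mem_liftZ_castSucc.mpr hh))
    · refine ⟨fun h1 => ?_, fun h1 => ?_, fun h1 h2 => ?_⟩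
      · have := mem_liftZ_last.mp h1; subst this; simpa [lastP] using hl
      · have := mem_liftZ_last.mp h1; subst this; simpa [lastP] using hl
      · cases o with
        | none => simpa [lastP] using hl
        | some c => cases c <;> simp_all [mem_liftZ_last, lastP]

lemma card_liftZ_none (Z : Finset (Fin n × Bool)) : (liftZ none Z).card = Z.card := card_upZ Z

lemma card_liftZ_some (c : Bool) (Z : Finset (Fin n × Bool)) :
    (liftZ (some c) Z).card = Z.card + 1 := by
  rw [show liftZ (some c) Z = insert (Fin.last n, c) (upZ Z) from rfl,
    Finset.card_insert_of_notMem last_not_mem_upZ, card_upZ]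

lemma ZOk_liftZ {A₀ : Finset (Fin n)} {A' : Finset (Fin (n + 1))} {o : Option Bool}
    {Z : Finset (Fin n × Bool)}
    (hup : ∀ j ∈ A₀, j.castSucc ∈ A') (hlast : o = some false → Fin.last n ∈ A')
    (hZ : ZOk A₀ Z) : ZOk A' (liftZ o Z) := by
  constructor
  · intro i hi
    rcases Fin.eq_castSucc_or_eq_last i with ⟨j, rfl⟩ | rfl
    · exact hup j (hZ.1 j (mem_liftZ_castSucc.mp hi))
    · exact hlast (mem_liftZ_last.mp hi)
  · rintro i ⟨h1, h2⟩
    rcases Fin.eq_castSucc_or_eq_last i with ⟨j, rfl⟩ | rfl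
    · exact hZ.2 j ⟨mem_liftZ_castSucc.mp h1, mem_liftZ_castSucc.mp h2⟩
    · have e1 := mem_liftZ_last.mp h1
      have e2 := mem_liftZ_last.mp h2
      rw [e1] at e2
      simp at e2

lemma ZOk_downZ {A₀ : Finset (Fin n)} {A' : Finset (Fin (n + 1))}
    {Z : Finset (Fin (n + 1) × Bool)}
    (hA' : ∀ j : Fin n, j.castSucc ∈ A' → j ∈ A₀) (hZ : ZOk A' Z) : ZOk A₀ (downZ Z) := by
  constructor
  · intro j hj; exact hA' j (hZ.1 _ (mem_downZ.mp hj))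
  · rintro j ⟨h1, h2⟩
    exact hZ.2 j.castSucc ⟨mem_downZ.mp h1, mem_downZ.mp h2⟩

end SdepthAux
namespace SdepthAux

variable {n : ℕ}

/-! ### Operations on Stanley decompositions -/

lemma decomp_reindex {A : Finset (Fin n)} {M : Set (Fin n → ℤ)} {ι ι' : Type}
    {u : ι → Fin n → ℤ} {Z : ι → Finset (Fin n × Bool)} (e : ι' ≃ ι)
    (h : IsStanleyDecompOn A M u Z) : IsStanleyDecompOn A M (u ∘ e) (Z ∘ e) := by
  obtain ⟨hfin, hok, hdisj, huni⟩ := h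
  refine ⟨?_, fun i => hok _, fun i j hij => hdisj fun hh => hij (e.injective hh), ?_⟩
  · exact Finite.of_equiv ι e.symm
  · rw [← huni]
    exact e.surjective.iUnion_comp fun i => stanleySet (u i) (Z i)

lemma mem_sdepth_set {A : Finset (Fin n)} {M : Set (Fin n → ℤ)} {k : ℕ∞} {ι : Type}
    {u : ι → Fin n → ℤ} {Z : ι → Finset (Fin n × Bool)}
    (h : IsStanleyDecompOn A M u Z) (hk : ∀ i, k ≤ ((Z i).card : ℕ∞)) :
    ∃ (r : ℕ) (u' : Fin r → Fin n → ℤ) (Z' : Fin r → Finset (Fin n × Bool)),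
      IsStanleyDecompOn A M u' Z' ∧ ∀ i, k ≤ ((Z' i).card : ℕ∞) := by
  have : Finite ι := h.1
  have : Fintype ι := Fintype.ofFinite ι
  exact ⟨Fintype.card ι, u ∘ (Fintype.equivFin ι).symm, Z ∘ (Fintype.equivFin ι).symm,
    decomp_reindex _ h, fun i => hk _⟩

lemma decomp_lift {A₀ : Finset (Fin n)} {A' : Finset (Fin (n + 1))} {M : Set (Fin n → ℤ)}
    {ι : Type} {u : ι → Fin n → ℤ} {Z : ι → Finset (Fin n × Bool)} (o : Option Bool) (m : ℤ)
    (hup : ∀ j ∈ A₀, j.castSucc ∈ A') (hlast : o = some false → Fin.last n ∈ A')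
    (h : IsStanleyDecompOn A₀ M u Z) :
    IsStanleyDecompOn A' {a | Fin.init a ∈ M ∧ lastP o m (a (Fin.last n))}
      (fun i => Fin.snoc (u i) m) (fun i => liftZ o (Z i)) := by
  obtain ⟨hfin, hok, hdisj, huni⟩ := h
  refine ⟨hfin, fun i => ZOk_liftZ hup hlast (hok i), ?_, ?_⟩
  · intro i j hij
    rw [Set.disjoint_left]
    intro a ha hb
    exact Set.disjoint_left.mp (hdisj hij) (mem_stanleySet_lift.mp ha).1
      (mem_stanleySet_lift.mp hb).1
  · ext a
    simp only [Set.mem_iUnion, Set.mem_setOf_eq, ← huni]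
    constructor
    · rintro ⟨i, hi⟩
      obtain ⟨h1, h2⟩ := mem_stanleySet_lift.mp hi
      exact ⟨⟨i, h1⟩, h2⟩
    · rintro ⟨⟨i, hi⟩, h2⟩
      exact ⟨i, mem_stanleySet_lift.mpr ⟨hi, h2⟩⟩

lemma decomp_slice {A₀ : Finset (Fin n)} {A' : Finset (Fin (n + 1))}
    {M' : Set (Fin (n + 1) → ℤ)} {ι : Type} {u : ι → Fin (n + 1) → ℤ}
    {Z : ι → Finset (Fin (n + 1) × Bool)} (m : ℤ)
    (hA' : ∀ j : Fin n, j.castSucc ∈ A' → j ∈ A₀)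
    (h : IsStanleyDecompOn A' M' u Z) :
    IsStanleyDecompOn A₀ {b | Fin.snoc b m ∈ M'}
      (fun i : {i : ι // lastOk m (u i) (Z i)} => Fin.init (u i))
      (fun i => downZ (Z i)) := by
  obtain ⟨hfin, hok, hdisj, huni⟩ := h
  have : Finite ι := hfin
  refine ⟨inferInstance, fun i => ZOk_downZ hA' (hok i), ?_, ?_⟩
  · rintro ⟨i, hi⟩ ⟨j, hj⟩ hij
    have hij' : i ≠ j := fun hh => hij (Subtype.ext hh)
    rw [Set.disjoint_left]
    intro b hb hb'
    exact Set.disjoint_left.mp (hdisj hij') (snoc_mem_stanleySet_iff.mpr ⟨hi, hb⟩)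
      (snoc_mem_stanleySet_iff.mpr ⟨hj, hb'⟩)
  · ext b
    simp only [Set.mem_iUnion, Set.mem_setOf_eq, ← huni]
    constructor
    · rintro ⟨⟨i, hi⟩, hb⟩
      exact ⟨i, snoc_mem_stanleySet_iff.mpr ⟨hi, hb⟩⟩
    · rintro ⟨i, hi⟩
      obtain ⟨h1, h2⟩ := snoc_mem_stanleySet_iff.mp hi
      exact ⟨⟨i, h1⟩, h2⟩

lemma decomp_glue {A : Finset (Fin n)} {σ : Type} [Finite σ] {M : σ → Set (Fin n → ℤ)}
    (hM : Pairwise (Function.onFun Disjoint M)) {ι : σ → Type}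
    {u : ∀ s, ι s → Fin n → ℤ} {Z : ∀ s, ι s → Finset (Fin n × Bool)}
    (h : ∀ s, IsStanleyDecompOn A (M s) (u s) (Z s)) :
    IsStanleyDecompOn A (⋃ s, M s) (fun p : Σ s, ι s => u p.1 p.2) fun p => Z p.1 p.2 := by
  have : ∀ s, Finite (ι s) := fun s => (h s).1
  refine ⟨inferInstance, fun p => (h p.1).2.1 p.2, ?_, ?_⟩
  · rintro ⟨s, i⟩ ⟨t, j⟩ hne
    by_cases hst : s = t
    · subst hst
      have hij : i ≠ j := by rintro rfl; exact hne rfl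
      exact (h s).2.2.1 hij
    · have h1 : stanleySet (u s i) (Z s i) ⊆ M s :=
        (h s).2.2.2 ▸ Set.subset_iUnion (fun i => stanleySet (u s i) (Z s i)) i
      have h2 : stanleySet (u t j) (Z t j) ⊆ M t :=
        (h t).2.2.2 ▸ Set.subset_iUnion (fun j => stanleySet (u t j) (Z t j)) j
      exact Set.disjoint_of_subset h1 h2 (hM hst)
  · rw [Set.iUnion_sigma]
    exact Set.iUnion_congr fun s => (h s).2.2.2

end SdepthAux
namespace SdepthAux

variable {n : ℕ}

/-! ### Slices of monomial ideals and the chain stabilization -/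

lemma snoc_add_snoc (b c : Fin n → ℤ) (x y : ℤ) :
    (Fin.snoc b x : Fin (n + 1) → ℤ) + Fin.snoc c y = Fin.snoc (b + c) (x + y) := by
  funext p
  rcases Fin.eq_castSucc_or_eq_last p with ⟨j, rfl⟩ | rfl
  · simp [Fin.snoc_castSucc]
  · simp [Fin.snoc_last]

lemma snoc_mem_sfMon {A : Finset (Fin (n + 1))} {c : Fin n → ℤ} {y : ℤ}
    (hc : ∀ j : Fin n, j.castSucc ∉ A → 0 ≤ c j) (hy : Fin.last n ∉ A → 0 ≤ y) :
    Fin.snoc c y ∈ SfMon A := by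
  intro p hp
  rcases Fin.eq_castSucc_or_eq_last p with ⟨j, rfl⟩ | rfl
  · simpa [Fin.snoc_castSucc] using hc j hp
  · simpa [Fin.snoc_last] using hy hp

lemma slice_isMonomialIdeal {A : Finset (Fin (n + 1))} {I : Set (Fin (n + 1) → ℤ)} (m : ℤ)
    (hI : IsMonomialIdeal A I) :
    IsMonomialIdeal (Finset.univ.filter fun j : Fin n => j.castSucc ∈ A)
      {b | Fin.snoc b m ∈ I} := by
  constructor
  · intro b hb j hj
    simp only [Finset.mem_filter, Finset.mem_univ, true_and] at hj
    simpa [Fin.snoc_castSucc] using hI.1 hb j.castSucc hj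
  · intro b hb c hc
    have hc' : Fin.snoc c 0 ∈ SfMon A := by
      refine snoc_mem_sfMon (fun j hj => hc j ?_) (fun _ => le_refl 0)
      simp only [Finset.mem_filter, Finset.mem_univ, true_and]
      exact hj
    have := hI.2 _ hb _ hc'
    rw [snoc_add_snoc, add_zero] at this
    exact this

lemma slice_mono {A : Finset (Fin (n + 1))} {I : Set (Fin (n + 1) → ℤ)}
    (hI : IsMonomialIdeal A I) {m m' : ℤ} (h : m ≤ m') :
    {b : Fin n → ℤ | Fin.snoc b m ∈ I} ⊆ {b | Fin.snoc b m' ∈ I} := by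
  intro b hb
  have hc : Fin.snoc (0 : Fin n → ℤ) (m' - m) ∈ SfMon A :=
    snoc_mem_sfMon (fun j _ => le_refl 0) (fun _ => by omega)
  have := hI.2 _ hb _ hc
  rw [snoc_add_snoc, add_zero] at this
  simpa [show m + (m' - m) = m' by ring] using this

lemma exists_sub_mem_sfMon {A : Finset (Fin n)} (g : ℕ → Fin n → ℤ)
    (hg : ∀ k, g k ∈ SfMon A) : ∃ i j, i < j ∧ g j - g i ∈ SfMon A := by
  classical
  have hp : Set.IsPWO (Set.univ : Set (Fin n → ℕ)) :=
    Set.isPWO_of_wellQuasiOrderedLE Set.univ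
  obtain ⟨i, j, hij, hle⟩ := (Set.partiallyWellOrderedOn_iff_exists_lt.mp hp)
    (fun k c => if c ∈ A then 0 else (g k c).toNat) fun _ => Set.mem_univ _
  refine ⟨i, j, hij, fun c hc => ?_⟩
  have h1 := hle c
  simp only [if_neg hc] at h1
  have h2 := hg i c hc
  have h3 := hg j c hc
  simp only [Pi.sub_apply]
  omega

lemma chain_stabilizes {A : Finset (Fin n)} (F : ℕ → Set (Fin n → ℤ))
    (hid : ∀ d, IsMonomialIdeal A (F d))
    (hmono : ∀ d e : ℕ, d ≤ e → F d ⊆ F e) : ∃ D, ∀ d, D ≤ d → F d = F D := by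
  by_contra hcon
  push_neg at hcon
  choose f hf1 hf2 using hcon
  set e : ℕ → ℕ := fun k => Nat.rec 0 (fun _ p => f p) k with he
  have he_succ : ∀ k, e (k + 1) = f (e k) := fun k => rfl
  have hmono_e : ∀ k, e k < e (k + 1) := by
    intro k
    rw [he_succ]
    rcases lt_or_eq_of_le (hf1 (e k)) with h | h
    · exact h
    · exact absurd (h ▸ rfl) (hf2 (e k))
  have hstrict : StrictMono e := strictMono_nat_of_lt_succ hmono_e
  have hpick : ∀ k, ∃ a, a ∈ F (e (k + 1)) ∧ a ∉ F (e k) := by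
    intro k
    have hsub : F (e k) ⊆ F (e (k + 1)) := hmono _ _ (hmono_e k).le
    have hne : F (e (k + 1)) ≠ F (e k) := by rw [he_succ]; exact hf2 (e k)
    by_contra hno
    push_neg at hno
    exact hne (Set.Subset.antisymm (fun a ha => hno a ha) hsub)
  choose g hg1 hg2 using hpick
  obtain ⟨i, j, hij, hsf⟩ := exists_sub_mem_sfMon g fun k => (hid _).1 (hg1 k)
  have hgi : g i ∈ F (e j) := hmono _ _ (hstrict.monotone (Nat.succ_le_of_lt hij)) (hg1 i)
  have hgj : g j ∈ F (e j) := by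
    have := (hid (e j)).2 _ hgi _ hsf
    simpa using this
  exact hg2 j hgj

end SdepthAux
namespace SdepthAux

theorem exists_decomp : ∀ {n : ℕ} (A : Finset (Fin n)) (I J : Set (Fin n → ℤ)),
    IsMonomialIdeal A I → IsMonomialIdeal A J →
    ∃ (ι : Type) (_ : Finite ι) (u : ι → Fin n → ℤ) (Z : ι → Finset (Fin n × Bool)),
      IsStanleyDecompOn A (I \ J) u Z := by
  intro n
  induction n with
  | zero =>
    intro A I J hI hJ
    by_cases hne : (I \ J).Nonempty
    · obtain ⟨v, hv⟩ := hne
      refine ⟨PUnit, inferInstance, fun _ => v, fun _ => ∅, inferInstance, ?_, ?_, ?_⟩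
      · intro _; exact ⟨by simp, by simp⟩
      · intro a b hab; exact absurd (Subsingleton.elim a b) hab
      · ext a
        simp only [Set.mem_iUnion]
        constructor
        · intro _
          rw [Subsingleton.elim a v]; exact hv
        · intro _
          exact ⟨PUnit.unit, fun i => i.elim0⟩
    · refine ⟨PEmpty, inferInstance, fun x => x.elim, fun x => x.elim, inferInstance,
        fun x => x.elim, fun x => x.elim, ?_⟩
      rw [Set.not_nonempty_iff_eq_empty.mp hne, Set.iUnion_of_empty]
  | succ n ih =>
    intro A I J hI hJ
    classical
    set A₀ : Finset (Fin n) := Finset.univ.filter (fun j : Fin n => j.castSucc ∈ A) with hA₀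
    have hup : ∀ j ∈ A₀, j.castSucc ∈ A := fun j hj => by
      simpa [hA₀] using hj
    have hsnoc : ∀ a : Fin (n + 1) → ℤ,
        Fin.snoc (Fin.init a) (a (Fin.last n)) = a := fun a => Fin.snoc_init_self a
    by_cases hlast : Fin.last n ∈ A
    · -- `t` is a Laurent variable in the ambient ring: ideals are cylinders over slices
      have key : ∀ (K : Set (Fin (n + 1) → ℤ)), IsMonomialIdeal A K →
          ∀ a : Fin (n + 1) → ℤ, (a ∈ K ↔ Fin.init a ∈ {b | Fin.snoc b 0 ∈ K}) := by
        intro K hK a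
        have hmove : ∀ (x y : ℤ) (b : Fin n → ℤ), Fin.snoc b x ∈ K → Fin.snoc b y ∈ K := by
          intro x y b hb
          have hc : Fin.snoc (0 : Fin n → ℤ) (y - x) ∈ SfMon A :=
            snoc_mem_sfMon (fun j _ => le_refl 0) (fun h => absurd hlast h)
          have := hK.2 _ hb _ hc
          rw [snoc_add_snoc, add_zero] at this
          simpa [show x + (y - x) = y by ring] using this
        constructor
        · intro ha
          exact hmove (a (Fin.last n)) 0 _ (by rwa [hsnoc])
        · intro ha
          have := hmove 0 (a (Fin.last n)) _ ha
          rwa [hsnoc] at this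
      set M₀ : Set (Fin n → ℤ) := {b | Fin.snoc b 0 ∈ I} \ {b | Fin.snoc b 0 ∈ J} with hM₀
      obtain ⟨ι, hfin, u, Z, hd⟩ := ih A₀ {b | Fin.snoc b 0 ∈ I} {b | Fin.snoc b 0 ∈ J}
        (slice_isMonomialIdeal 0 hI) (slice_isMonomialIdeal 0 hJ)
      set Mc : Bool → Set (Fin (n + 1) → ℤ) := fun c =>
        {a | Fin.init a ∈ M₀ ∧ lastP (some c) (if c then 0 else -1) (a (Fin.last n))} with hMc
      have hdisj : Pairwise (Function.onFun Disjoint Mc) := by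
        have hkey : ∀ a : Fin (n + 1) → ℤ, a ∈ Mc true → a ∈ Mc false → False := by
          intro a h1 h2
          have g1 : (0 : ℤ) ≤ a (Fin.last n) := h1.2
          have g2 : a (Fin.last n) ≤ -1 := h2.2
          omega
        intro c c' hcc
        rw [Function.onFun, Set.disjoint_left]
        intro a ha ha'
        cases c <;> cases c'
        · exact absurd rfl hcc
        · exact hkey a ha' ha
        · exact hkey a ha ha'
        · exact absurd rfl hcc
      have hds : ∀ c : Bool, IsStanleyDecompOn A (Mc c)
          (fun i : ι => Fin.snoc (u i) (if c then 0 else -1))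
          (fun i => liftZ (some c) (Z i)) :=
        fun c => decomp_lift (some c) _ hup (fun _ => hlast) hd
      have hglue := decomp_glue hdisj hds
      have hun : (⋃ c, Mc c) = I \ J := by
        ext a
        have hI' := key I hI a
        have hJ' := key J hJ a
        simp only [hMc, hM₀, Set.mem_iUnion, Set.mem_setOf_eq, Set.mem_diff]
        constructor
        · rintro ⟨c, ⟨h1, h2⟩, -⟩
          exact ⟨hI'.mpr h1, fun hj => h2 (hJ'.mp hj)⟩
        · rintro ⟨h1, h2⟩
          rcases le_or_gt 0 (a (Fin.last n)) with h3 | h3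
          · exact ⟨true, ⟨hI'.mp h1, fun hj => h2 (hJ'.mpr hj)⟩, by simpa [lastP] using h3⟩
          · refine ⟨false, ⟨hI'.mp h1, fun hj => h2 (hJ'.mpr hj)⟩, ?_⟩
            simp only [lastP, if_false]
            omega
      haveI := hfin
      exact ⟨(Σ _ : Bool, ι), inferInstance, _, _, by rw [← hun]; exact hglue⟩
    · -- `t` is a polynomial variable: slices stabilize
      set FI : ℕ → Set (Fin n → ℤ) := fun d => {b | Fin.snoc b (d : ℤ) ∈ I} with hFI
      set FJ : ℕ → Set (Fin n → ℤ) := fun d => {b | Fin.snoc b (d : ℤ) ∈ J} with hFJ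
      have hFIid : ∀ d, IsMonomialIdeal A₀ (FI d) := fun d => slice_isMonomialIdeal _ hI
      have hFJid : ∀ d, IsMonomialIdeal A₀ (FJ d) := fun d => slice_isMonomialIdeal _ hJ
      have hFImono : ∀ d e : ℕ, d ≤ e → FI d ⊆ FI e := fun d e h =>
        slice_mono hI (by exact_mod_cast h)
      have hFJmono : ∀ d e : ℕ, d ≤ e → FJ d ⊆ FJ e := fun d e h =>
        slice_mono hJ (by exact_mod_cast h)
      obtain ⟨DI, hDI⟩ := chain_stabilizes FI hFIid hFImono
      obtain ⟨DJ, hDJ⟩ := chain_stabilizes FJ hFJid hFJmono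
      set D := max DI DJ with hD
      have hDI' : ∀ d, D ≤ d → FI d = FI D := fun d hd => by
        rw [hDI d (le_trans (le_max_left _ _) hd), hDI D (le_max_left _ _)]
      have hDJ' : ∀ d, D ≤ d → FJ d = FJ D := fun d hd => by
        rw [hDJ d (le_trans (le_max_right _ _) hd), hDJ D (le_max_right _ _)]
      have hpos : ∀ a ∈ I, (0 : ℤ) ≤ a (Fin.last n) := fun a ha => hI.1 ha _ hlast
      set Ms : Option (Fin D) → Set (Fin (n + 1) → ℤ) := fun s =>
        match s with
        | some d => {a | Fin.init a ∈ (FI (d : ℕ) \ FJ (d : ℕ)) ∧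
            lastP none ((d : ℕ) : ℤ) (a (Fin.last n))}
        | none => {a | Fin.init a ∈ (FI D \ FJ D) ∧
            lastP (some true) (D : ℤ) (a (Fin.last n))} with hMs
      have hdisj : Pairwise (Function.onFun Disjoint Ms) := by
        rintro (_ | d) (_ | d') hne
        · exact absurd rfl hne
        · rw [Function.onFun, Set.disjoint_left]
          rintro a ⟨-, h1⟩ ⟨-, h2⟩
          simp only [lastP, hMs] at h1 h2
          have := d'.isLt
          omega
        · rw [Function.onFun, Set.disjoint_left]
          rintro a ⟨-, h1⟩ ⟨-, h2⟩
          simp only [lastP, hMs] at h1 h2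
          have := d.isLt
          omega
        · rw [Function.onFun, Set.disjoint_left]
          rintro a ⟨-, h1⟩ ⟨-, h2⟩
          simp only [lastP, hMs] at h1 h2
          have hval : (d : ℕ) = (d' : ℕ) := by omega
          exact hne (congrArg some (Fin.ext hval))
      have hdec : ∀ s, ∃ (ι : Type) (_ : Finite ι) (u : ι → Fin (n + 1) → ℤ)
          (Z : ι → Finset (Fin (n + 1) × Bool)), IsStanleyDecompOn A (Ms s) u Z := by
        rintro (_ | d)
        · obtain ⟨ι, hfin, u, Z, hd⟩ := ih A₀ (FI D) (FJ D) (hFIid D) (hFJid D)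
          exact ⟨ι, hfin, _, _, decomp_lift (some true) (D : ℤ) hup (by simp) hd⟩
        · obtain ⟨ι, hfin, u, Z, hd⟩ := ih A₀ (FI (d : ℕ)) (FJ (d : ℕ))
            (hFIid (d : ℕ)) (hFJid (d : ℕ))
          exact ⟨ι, hfin, _, _, decomp_lift none ((d : ℕ) : ℤ) hup (by simp) hd⟩
      choose ιs hfins us Zs hds using hdec
      have hglue := decomp_glue hdisj hds
      have hun : (⋃ s, Ms s) = I \ J := by
        ext a
        simp only [Set.mem_iUnion, Set.mem_diff]
        constructor
        · rintro ⟨s, hs⟩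
          match s with
          | some d =>
            obtain ⟨⟨h1, h2⟩, h3⟩ := hs
            simp only [lastP] at h3
            have he : Fin.snoc (Fin.init a) (((d : ℕ) : ℕ) : ℤ) = a := by
              rw [← h3]; exact hsnoc a
            simp only [hFI, Set.mem_setOf_eq] at h1
            simp only [hFJ, Set.mem_setOf_eq] at h2
            rw [he] at h1 h2
            exact ⟨h1, h2⟩
          | none =>
            obtain ⟨⟨h1, h2⟩, h3⟩ := hs
            simp only [lastP] at h3
            have h0 : (0 : ℤ) ≤ a (Fin.last n) := by
              have : (0 : ℤ) ≤ (D : ℤ) := Int.natCast_nonneg D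
              omega
            set d : ℕ := (a (Fin.last n)).toNat with hd
            have hDd : D ≤ d := by omega
            have he : Fin.snoc (Fin.init a) ((d : ℕ) : ℤ) = a := by
              rw [hd]
              rw [Int.toNat_of_nonneg h0]
              exact hsnoc a
            rw [← hDI' d hDd] at h1
            rw [← hDJ' d hDd] at h2
            simp only [hFI, Set.mem_setOf_eq] at h1
            simp only [hFJ, Set.mem_setOf_eq] at h2
            rw [he] at h1 h2
            exact ⟨h1, h2⟩
        · rintro ⟨h1, h2⟩
          have h0 : (0 : ℤ) ≤ a (Fin.last n) := hpos a h1
          set d : ℕ := (a (Fin.last n)).toNat with hd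
          have he : Fin.snoc (Fin.init a) ((d : ℕ) : ℤ) = a := by
            rw [hd, Int.toNat_of_nonneg h0]
            exact hsnoc a
          have hFId : Fin.init a ∈ FI d := by
            simp only [hFI, Set.mem_setOf_eq]
            rw [he]; exact h1
          have hFJd : Fin.init a ∉ FJ d := by
            intro hj
            simp only [hFJ, Set.mem_setOf_eq] at hj
            rw [he] at hj
            exact h2 hj
          have hlastd : a (Fin.last n) = ((d : ℕ) : ℤ) := (Int.toNat_of_nonneg h0).symm
          by_cases hdD : d < D
          · exact ⟨some ⟨d, hdD⟩, ⟨hFId, hFJd⟩, hlastd⟩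
          · push_neg at hdD
            rw [hDI' d hdD] at hFId
            rw [hDJ' d hdD] at hFJd
            refine ⟨none, ⟨hFId, hFJd⟩, ?_⟩
            simp only [lastP]
            omega
      haveI := fun s => hfins s
      exact ⟨(Σ s, ιs s), inferInstance, _, _, by rw [← hun]; exact hglue⟩

end SdepthAux
namespace SdepthAux

lemma sSup_mem_of_bdd {S : Set ℕ∞} (h0 : (0 : ℕ∞) ∈ S) {C : ℕ}
    (hb : ∀ k ∈ S, k ≤ (C : ℕ∞)) : ∃ m : ℕ, (↑m : ℕ∞) ∈ S ∧ sSup S = ↑m := by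
  have hsup_le : sSup S ≤ (C : ℕ∞) := sSup_le hb
  have hne : sSup S ≠ ⊤ := by
    intro h
    rw [h, top_le_iff] at hsup_le
    exact (ENat.coe_ne_top C) hsup_le
  set m : ℕ := (sSup S).toNat with hmdef
  have hm : (m : ℕ∞) = sSup S := ENat.coe_toNat hne
  by_cases hm0 : m = 0
  · exact ⟨0, h0, by rw [← hm, hm0]⟩
  · have hlt : ((m - 1 : ℕ) : ℕ∞) < sSup S := by
      rw [← hm]
      exact_mod_cast Nat.sub_lt (Nat.pos_of_ne_zero hm0) one_pos
    obtain ⟨k, hkS, hk⟩ := lt_sSup_iff.mp hlt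
    have hk2 : k ≤ (m : ℕ∞) := hm ▸ le_sSup hkS
    have hkne : k ≠ ⊤ := by
      intro h
      rw [h, top_le_iff] at hk2
      exact (ENat.coe_ne_top m) hk2
    have hkk : ((k.toNat : ℕ) : ℕ∞) = k := ENat.coe_toNat hkne
    have h1 : (m - 1 : ℕ) < k.toNat := by
      rw [← hkk] at hk
      exact_mod_cast hk
    have h2 : k.toNat ≤ m := by
      rw [← hkk] at hk2
      exact_mod_cast hk2
    have : k.toNat = m := by omega
    refine ⟨m, ?_, hm.symm⟩
    rw [← this, hkk]
    exact hkS

end SdepthAux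
namespace SdepthAux

lemma sdepth_ext_le {n : ℕ} {A : Finset (Fin n)} {A' : Finset (Fin (n + 1))}
    {M : Set (Fin n → ℤ)} {M' : Set (Fin (n + 1) → ℤ)}
    (hAdown : ∀ j : Fin n, j.castSucc ∈ A' → j ∈ A)
    (hslice : {b : Fin n → ℤ | Fin.snoc b 0 ∈ M'} = M) :
    sdepth A' M' ≤ sdepth A M + 1 := by
  unfold sdepth
  apply sSup_le
  rintro k ⟨r, u, Z, hd, hk⟩
  have hsl := decomp_slice (A₀ := A) 0 hAdown hd
  rw [hslice] at hsl
  have hcard : ∀ i : {i : Fin r // lastOk 0 (u i) (Z i)},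
      k - 1 ≤ ((downZ (Z i.1)).card : ℕ∞) := by
    intro i
    have h2 : ((Z i.1).card : ℕ∞) ≤ ((downZ (Z i.1)).card : ℕ∞) + 1 := by
      exact_mod_cast card_le_card_downZ_add_one (hd.2.1 i.1)
    exact tsub_le_iff_right.mpr ((hk i.1).trans h2)
  obtain ⟨r', u', Z', hd', hk'⟩ := mem_sdepth_set hsl hcard
  refine le_trans le_tsub_add (add_le_add_left (le_sSup ?_) 1)
  exact ⟨r', u', Z', hd', hk'⟩

lemma sdepth_ext_ge_aux {n : ℕ} {A' : Finset (Fin n)} {M' : Set (Fin n → ℤ)}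
    {ι : Type} {u' : ι → Fin n → ℤ} {Z' : ι → Finset (Fin n × Bool)} {k : ℕ∞}
    (hd : IsStanleyDecompOn A' M' u' Z') (hk : ∀ i, k ≤ ((Z' i).card : ℕ∞)) :
    k ≤ sdepth A' M' := by
  unfold sdepth
  obtain ⟨r, u, Z, hd2, hk2⟩ := mem_sdepth_set hd hk
  exact le_sSup ⟨r, u, Z, hd2, hk2⟩

end SdepthAux

/-- For monomial ideals `J ⊂ I ⊂ S_f` and a new variable `t` (encoded as the last index
of `Fin (n+1)`): `sdepth (I/J)[t] = sdepth (I/J)[t, t⁻¹] = sdepth I/J + 1`.  For `(I/J)[t]`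
the ambient ring is `S_f[t]` (localizing set `A`, mapped into `Fin (n+1)`), and for
`(I/J)[t, t⁻¹]` it is `S_f[t, t⁻¹]` (localizing set `A ∪ {t}`). -/
theorem sdepth_polynomial_and_laurent_extension {n : ℕ} (A : Finset (Fin n))
    (I J : Set (Fin n → ℤ))
    (hI : IsMonomialIdeal A I) (hJ : IsMonomialIdeal A J) (hJI : J ⊂ I) :
    sdepth (A.image Fin.castSucc)
        {a : Fin (n + 1) → ℤ | Fin.init a ∈ I \ J ∧ 0 ≤ a (Fin.last n)} =
      sdepth A (I \ J) + 1 ∧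
    sdepth (insert (Fin.last n) (A.image Fin.castSucc))
        {a : Fin (n + 1) → ℤ | Fin.init a ∈ I \ J} =
      sdepth A (I \ J) + 1 := by
  classical
  obtain ⟨a₀, ha₀I, ha₀J⟩ := Set.exists_of_ssubset hJI
  obtain ⟨ι₀, hfin₀, u₀, Z₀, hd₀⟩ := SdepthAux.exists_decomp A I J hI hJ
  have h0 : (0 : ℕ∞) ∈ {k : ℕ∞ | ∃ (r : ℕ) (u : Fin r → Fin n → ℤ)
      (Z : Fin r → Finset (Fin n × Bool)), IsStanleyDecompOn A (I \ J) u Z ∧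
      ∀ i, k ≤ ((Z i).card : ℕ∞)} :=
    SdepthAux.mem_sdepth_set hd₀ fun _ => zero_le
  have hbdd : ∀ k ∈ {k : ℕ∞ | ∃ (r : ℕ) (u : Fin r → Fin n → ℤ)
      (Z : Fin r → Finset (Fin n × Bool)), IsStanleyDecompOn A (I \ J) u Z ∧
      ∀ i, k ≤ ((Z i).card : ℕ∞)}, k ≤ ((Fintype.card (Fin n × Bool) : ℕ) : ℕ∞) := by
    rintro k ⟨r, u, Z, hd, hk⟩
    have haU : a₀ ∈ ⋃ i, stanleySet (u i) (Z i) := by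
      rw [hd.2.2.2]; exact ⟨ha₀I, ha₀J⟩
    obtain ⟨i, hi⟩ := Set.mem_iUnion.mp haU
    exact (hk i).trans (by exact_mod_cast Finset.card_le_univ (Z i))
  obtain ⟨m, hmS, hm⟩ := SdepthAux.sSup_mem_of_bdd h0 hbdd
  have hsd : sdepth A (I \ J) = (m : ℕ∞) := hm
  obtain ⟨r, u, Z, hd, hk⟩ := hmS
  rw [hsd]
  constructor
  · -- polynomial extension
    apply le_antisymm
    · refine le_trans (SdepthAux.sdepth_ext_le (A := A) (M := I \ J) ?_ ?_) ?_
      · intro j hj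
        obtain ⟨x, hx, he⟩ := Finset.mem_image.mp hj
        rwa [← Fin.castSucc_injective n he]
      · ext b
        simp [Fin.init_snoc, Fin.snoc_last]
      · rw [hsd]
    · have hAup : ∀ j ∈ A, j.castSucc ∈ A.image Fin.castSucc := fun j hj =>
        Finset.mem_image_of_mem _ hj
      have hlf := SdepthAux.decomp_lift (some true) 0 hAup (by simp) hd
      have hlf' : IsStanleyDecompOn (A.image Fin.castSucc)
          {a : Fin (n + 1) → ℤ | Fin.init a ∈ I \ J ∧ 0 ≤ a (Fin.last n)}
          (fun i => Fin.snoc (u i) 0) (fun i => SdepthAux.liftZ (some true) (Z i)) := hlf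
      refine SdepthAux.sdepth_ext_ge_aux hlf' ?_
      intro i
      rw [SdepthAux.card_liftZ_some, Nat.cast_add, Nat.cast_one]
      exact add_le_add_left (hk i) 1
  · -- Laurent extension
    apply le_antisymm
    · refine le_trans (SdepthAux.sdepth_ext_le (A := A) (M := I \ J) ?_ ?_) ?_
      · intro j hj
        rcases Finset.mem_insert.mp hj with h | h
        · exact absurd h (Fin.castSucc_lt_last j).ne
        · obtain ⟨x, hx, he⟩ := Finset.mem_image.mp h
          rwa [← Fin.castSucc_injective n he]
      · ext b
        simp [Fin.init_snoc]
      · rw [hsd]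
    · have hup2 : ∀ j ∈ A, j.castSucc ∈ insert (Fin.last n) (A.image Fin.castSucc) :=
        fun j hj => Finset.mem_insert_of_mem (Finset.mem_image_of_mem _ hj)
      have hds : ∀ c : Bool, IsStanleyDecompOn (insert (Fin.last n) (A.image Fin.castSucc))
          ((fun c : Bool => {a : Fin (n + 1) → ℤ | Fin.init a ∈ I \ J ∧
            SdepthAux.lastP (some c) (if c then 0 else -1) (a (Fin.last n))}) c)
          (fun i => Fin.snoc (u i) (if c then 0 else -1))
          (fun i => SdepthAux.liftZ (some c) (Z i)) :=
        fun c => SdepthAux.decomp_lift (some c) _ hup2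
          (fun _ => Finset.mem_insert_self _ _) hd
      have hdisj : Pairwise (Function.onFun Disjoint
          (fun c : Bool => {a : Fin (n + 1) → ℤ | Fin.init a ∈ I \ J ∧
            SdepthAux.lastP (some c) (if c then 0 else -1) (a (Fin.last n))})) := by
        intro c c' hcc
        rw [Function.onFun, Set.disjoint_left]
        intro a ha ha'
        cases c <;> cases c'
        · exact absurd rfl hcc
        · have g1 : a (Fin.last n) ≤ -1 := ha.2
          have g2 : (0 : ℤ) ≤ a (Fin.last n) := ha'.2
          omega
        · have g1 : (0 : ℤ) ≤ a (Fin.last n) := ha.2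
          have g2 : a (Fin.last n) ≤ -1 := ha'.2
          omega
        · exact absurd rfl hcc
      have hglue := SdepthAux.decomp_glue hdisj hds
      have hun : (⋃ c : Bool, {a : Fin (n + 1) → ℤ | Fin.init a ∈ I \ J ∧
          SdepthAux.lastP (some c) (if c then 0 else -1) (a (Fin.last n))}) =
          {a : Fin (n + 1) → ℤ | Fin.init a ∈ I \ J} := by
        ext a
        simp only [Set.mem_iUnion, Set.mem_setOf_eq]
        constructor
        · rintro ⟨c, h1, -⟩
          exact h1
        · intro h1
          rcases le_or_gt 0 (a (Fin.last n)) with h3 | h3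
          · exact ⟨true, h1, h3⟩
          · exact ⟨false, h1, show a (Fin.last n) ≤ -1 by omega⟩
      rw [hun] at hglue
      refine SdepthAux.sdepth_ext_ge_aux hglue ?_
      rintro ⟨c, i⟩
      rw [SdepthAux.card_liftZ_some, Nat.cast_add, Nat.cast_one]
      exact add_le_add_left (hk i) 1
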